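/- Under the assumptions on ω, for every ρ ∈ L¹(]a,b[) and all x ∈ [a,b], the second derivative of x ↦ (𝒥ρ)(x) satisfies |∂²_{xx} (𝒥ρ)(x)| ≤ 𝒲 ‖ρ‖_{L¹(]a,b[)}, where 𝒲 = 2‖ω″‖_{L∞}/K_ω + ‖ω‖_{L∞}‖ω″‖_{L¹}/K_ω² + 2‖ω‖_{L∞}‖ω′‖²_{L¹}/K_ω³ + 2‖ω′‖_{L∞}‖ω′‖_{L¹}/K_ω². -/

import Mathlib

open MeasureTheory Real intervalIntegral

lemma key_deriv (a b : ℝ) (ρ : ℝ → ℝ) (hρ : IntervalIntegrable ρ volume a b)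
    (g : ℝ → ℝ) (hgd : Differentiable ℝ g) (hg'c : Continuous (deriv g))
    (M : ℝ) (hM : ∀ y, |deriv g y| ≤ M) (x : ℝ) :
    HasDerivAt (fun x => ∫ y in a..b, ρ y * g (y - x))
      (-∫ y in a..b, ρ y * deriv g (y - x)) x := by
  have hρm : AEStronglyMeasurable ρ (volume.restrict (Set.uIoc a b)) :=
    (intervalIntegrable_iff.mp hρ).aestronglyMeasurable
  have hgc : Continuous g := hgd.continuous
  have h := intervalIntegral.hasDerivAt_integral_of_dominated_loc_of_deriv_le
    (F := fun x t => ρ t * g (t - x)) (F' := fun x t => ρ t * -(deriv g (t - x)))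
    (x₀ := x) (bound := fun t => M * |ρ t|) (μ := volume) (a := a) (b := b)
    (s := Set.univ) Filter.univ_mem
    (Filter.Eventually.of_forall fun z =>
      hρm.mul ((hgc.comp (continuous_id.sub continuous_const)).aestronglyMeasurable))
    (hρ.mul_continuousOn ((hgc.comp (continuous_id.sub continuous_const)).continuousOn))
    (hρm.mul (((hg'c.comp (continuous_id.sub continuous_const)).neg).aestronglyMeasurable))
    (Filter.Eventually.of_forall fun t _ z _ => by
      show ‖ρ t * -(deriv g (t - z))‖ ≤ M * |ρ t|
      have : ‖ρ t * -(deriv g (t - z))‖ = |ρ t| * |deriv g (t - z)| := by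
        rw [Real.norm_eq_abs, abs_mul, abs_neg]
      rw [this, mul_comm M]
      exact mul_le_mul_of_nonneg_left (hM _) (abs_nonneg _))
    ((hρ.abs).const_mul M)
    (Filter.Eventually.of_forall fun t _ z _ => by
      have h1 : HasDerivAt (fun x : ℝ => t - x) (-1 : ℝ) z := by
        simpa using (hasDerivAt_id z).const_sub t
      have h2 : HasDerivAt (fun x : ℝ => g (t - x)) (deriv g (t - z) * (-1)) z :=
        ((hgd (t - z)).hasDerivAt).comp z h1
      simpa [mul_comm, mul_neg, mul_one] using h2.const_mul (ρ t))
  have h2 := h.2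
  have : (∫ t in a..b, ρ t * -(deriv g (t - x))) = -∫ t in a..b, ρ t * deriv g (t - x) := by
    rw [← intervalIntegral.integral_neg]
    congr 1; ext t; ring
  rwa [this] at h2

lemma int_bound (a b : ℝ) (hab : a ≤ b) (ρ : ℝ → ℝ) (hρ : IntervalIntegrable ρ volume a b)
    (g : ℝ → ℝ) (hg : Continuous g) (M : ℝ) (hM : ∀ y, |g y| ≤ M) (x : ℝ) :
    |∫ y in a..b, ρ y * g (y - x)| ≤ M * ∫ y in a..b, |ρ y| := by
  have hint : IntervalIntegrable (fun y => ρ y * g (y - x)) volume a b :=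
    hρ.mul_continuousOn ((hg.comp (continuous_id.sub continuous_const)).continuousOn)
  calc |∫ y in a..b, ρ y * g (y - x)| ≤ ∫ y in a..b, |ρ y * g (y - x)| :=
        intervalIntegral.abs_integral_le_integral_abs hab
    _ ≤ ∫ y in a..b, M * |ρ y| := by
        apply intervalIntegral.integral_mono_on hab hint.abs ((hρ.abs).const_mul M)
        intro y _
        rw [abs_mul, mul_comm M]
        exact mul_le_mul_of_nonneg_left (hM _) (abs_nonneg _)
    _ = M * ∫ y in a..b, |ρ y| := intervalIntegral.integral_const_mul M _

lemma int_bound2 (a b x : ℝ) (hab : a ≤ b) (g : ℝ → ℝ)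
    (hgint : Integrable g) : |∫ y in a..b, (1:ℝ) * g (y - x)| ≤ ∫ y, |g y| := by
  simp only [one_mul]
  have hci : Integrable (fun y => |g (y - x)|) := (hgint.comp_sub_right x).abs
  calc |∫ y in a..b, g (y - x)| ≤ ∫ y in a..b, |g (y - x)| :=
        intervalIntegral.abs_integral_le_integral_abs hab
    _ ≤ ∫ y, |g (y - x)| := by
        rw [intervalIntegral.integral_of_le hab]
        exact setIntegral_le_integral hci (Filter.Eventually.of_forall fun y => abs_nonneg _)
    _ = ∫ y, |g y| := integral_sub_right_eq_self (fun y => |g y|) x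

lemma div_bound' {A C B K : ℝ} (hA : |A| ≤ C) (hK : 0 < K) (hB : K ≤ B) : |A / B| ≤ C / K := by
  rw [abs_div, abs_of_pos (lt_of_lt_of_le hK hB)]
  exact div_le_div₀ (le_trans (abs_nonneg A) hA) hA hK hB

lemma abs4 (p q r s : ℝ) : |p - q - r + s| ≤ |p| + |q| + |r| + |s| := by
  have h1 := abs_add_le (p - q - r) s
  have h2 := abs_add_le (p - q) (-r)
  have h3 := abs_add_le p (-q)
  rw [abs_neg] at h2 h3
  rw [← sub_eq_add_neg] at h2 h3
  linarith

theorem stmt2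
    (a b Kω Mω Mω' Mω'' : ℝ) (hab : a < b) (hKω : 0 < Kω)
    (ω : ℝ → ℝ) (hω : ContDiff ℝ 2 ω)
    (hωint : Integrable ω) (hω'int : Integrable (deriv ω))
    (hω''int : Integrable (deriv (deriv ω)))
    (hωbd : ∀ y, |ω y| ≤ Mω)
    (hω'bd : ∀ y, |deriv ω y| ≤ Mω')
    (hω''bd : ∀ y, |deriv (deriv ω) y| ≤ Mω'')
    (W : ℝ → ℝ) (hW : ∀ x, W x = ∫ y in a..b, ω (y - x))
    (hWlb : ∀ x ∈ Set.Icc a b, Kω ≤ W x)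
    (ρ : ℝ → ℝ) (hρ : IntervalIntegrable ρ volume a b)
    (J : ℝ → ℝ) (hJ : ∀ x, J x = (∫ y in a..b, ρ y * ω (y - x)) / W x) :
    ∀ x ∈ Set.Icc a b,
      |deriv (deriv J) x| ≤
        (2 * Mω'' / Kω + Mω * (∫ y, |deriv (deriv ω) y|) / Kω ^ 2
          + 2 * Mω * (∫ y, |deriv ω y|) ^ 2 / Kω ^ 3
          + 2 * Mω' * (∫ y, |deriv ω y|) / Kω ^ 2) * ∫ y in a..b, |ρ y| := by
  -- regularity of ω
  have h11 : ContDiff ℝ ((1 : WithTop ℕ∞) + 1) ω := by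
    have h : ((1 : WithTop ℕ∞) + 1) = 2 := by norm_num
    rw [h]; exact hω
  have hsucc := contDiff_succ_iff_deriv.mp h11
  have hωd : Differentiable ℝ ω := hsucc.1
  have hω1 : ContDiff ℝ 1 (deriv ω) := hsucc.2.2
  have hone := contDiff_one_iff_deriv.mp hω1
  have hω'd : Differentiable ℝ (deriv ω) := hone.1
  have hω''c : Continuous (deriv (deriv ω)) := hone.2
  have hω'c : Continuous (deriv ω) := hω'd.continuous
  -- derivative machinery
  have hN1 : ∀ z, HasDerivAt (fun x => ∫ y in a..b, ρ y * ω (y - x))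
      (-∫ y in a..b, ρ y * deriv ω (y - z)) z :=
    key_deriv a b ρ hρ ω hωd hω'c Mω' hω'bd
  have hN2 : ∀ z, HasDerivAt (fun x => ∫ y in a..b, ρ y * deriv ω (y - x))
      (-∫ y in a..b, ρ y * deriv (deriv ω) (y - z)) z :=
    key_deriv a b ρ hρ (deriv ω) hω'd hω''c Mω'' hω''bd
  have h1int : IntervalIntegrable (fun _ : ℝ => (1:ℝ)) volume a b := intervalIntegrable_const
  have hWeq : W = fun x => ∫ y in a..b, (1:ℝ) * ω (y - x) := by
    funext x; rw [hW x]
    exact intervalIntegral.integral_congr fun y _ => (one_mul _).symm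
  have hWd : ∀ z, HasDerivAt W (-∫ y in a..b, (1:ℝ) * deriv ω (y - z)) z := by
    intro z; rw [hWeq]
    exact key_deriv a b (fun _ => 1) h1int ω hωd hω'c Mω' hω'bd z
  have hW2 : ∀ z, HasDerivAt (fun x => ∫ y in a..b, (1:ℝ) * deriv ω (y - x))
      (-∫ y in a..b, (1:ℝ) * deriv (deriv ω) (y - z)) z :=
    key_deriv a b (fun _ => 1) h1int (deriv ω) hω'd hω''c Mω'' hω''bd
  have hWdiff : Differentiable ℝ W := fun z => (hWd z).differentiableAt
  have hWc : Continuous W := hWdiff.continuous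
  -- open set where W > 0
  have hUopen : IsOpen {z : ℝ | 0 < W z} := isOpen_lt continuous_const hWc
  have hJeq : J = fun x => (∫ y in a..b, ρ y * ω (y - x)) / W x := funext hJ
  -- first derivative of J on U
  set J1 : ℝ → ℝ := fun z =>
    ((-∫ y in a..b, ρ y * deriv ω (y - z)) * W z -
      (∫ y in a..b, ρ y * ω (y - z)) * (-∫ y in a..b, (1:ℝ) * deriv ω (y - z))) / W z ^ 2
    with hJ1def
  have hJd : ∀ z ∈ {z : ℝ | 0 < W z}, HasDerivAt J (J1 z) z := by
    intro z hz
    rw [hJeq]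
    exact (hN1 z).div (hWd z) (ne_of_gt hz)
  intro x hx
  have hwx : Kω ≤ W x := hWlb x hx
  have hwpos : 0 < W x := lt_of_lt_of_le hKω hwx
  have hxU : x ∈ {z : ℝ | 0 < W z} := hwpos
  have hev : deriv J =ᶠ[nhds x] J1 := by
    filter_upwards [hUopen.mem_nhds hxU] with z hz
    exact (hJd z hz).deriv
  -- second derivative
  have h_num : HasDerivAt (fun z =>
      (-∫ y in a..b, ρ y * deriv ω (y - z)) * W z -
        (∫ y in a..b, ρ y * ω (y - z)) * (-∫ y in a..b, (1:ℝ) * deriv ω (y - z)))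
      ((-(-∫ y in a..b, ρ y * deriv (deriv ω) (y - x))) * W x +
        (-∫ y in a..b, ρ y * deriv ω (y - x)) * (-∫ y in a..b, (1:ℝ) * deriv ω (y - x)) -
       ((-∫ y in a..b, ρ y * deriv ω (y - x)) * (-∫ y in a..b, (1:ℝ) * deriv ω (y - x)) +
        (∫ y in a..b, ρ y * ω (y - x)) * (-(-∫ y in a..b, (1:ℝ) * deriv (deriv ω) (y - x))))) x :=
    ((hN2 x).neg.mul (hWd x)).sub ((hN1 x).mul (hW2 x).neg)
  have h_den : HasDerivAt (fun z => W z ^ 2)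
      ((2:ℕ) * W x ^ (2 - 1) * (-∫ y in a..b, (1:ℝ) * deriv ω (y - x))) x := (hWd x).pow 2
  have hJ1d := h_num.div h_den (pow_ne_zero 2 (ne_of_gt hwpos))
  -- abbreviations
  set n0 := ∫ y in a..b, ρ y * ω (y - x) with hn0
  set n1 := ∫ y in a..b, ρ y * deriv ω (y - x) with hn1
  set n2 := ∫ y in a..b, ρ y * deriv (deriv ω) (y - x) with hn2
  set w1 := ∫ y in a..b, (1:ℝ) * deriv ω (y - x) with hw1
  set w2 := ∫ y in a..b, (1:ℝ) * deriv (deriv ω) (y - x) with hw2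
  set R := ∫ y in a..b, |ρ y| with hRdef
  set I1 := ∫ y, |deriv ω y| with hI1def
  set I2 := ∫ y, |deriv (deriv ω) y| with hI2def
  have hD : deriv (deriv J) x =
      n2 / W x - n0 * w2 / W x ^ 2 - 2 * w1 * n1 / W x ^ 2 + 2 * n0 * w1 ^ 2 / W x ^ 3 := by
    rw [hev.deriv_eq, show deriv J1 x = _ from hJ1d.deriv]
    have hw0 : W x ≠ 0 := ne_of_gt hwpos
    field_simp
    ring
  rw [hD]
  -- bounds
  have hb0 : |n0| ≤ Mω * R := int_bound a b hab.le ρ hρ ω hωd.continuous Mω hωbd x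
  have hb1 : |n1| ≤ Mω' * R := int_bound a b hab.le ρ hρ (deriv ω) hω'c Mω' hω'bd x
  have hb2 : |n2| ≤ Mω'' * R :=
    int_bound a b hab.le ρ hρ (deriv (deriv ω)) hω''c Mω'' hω''bd x
  have hbw1 : |w1| ≤ I1 := int_bound2 a b x hab.le (deriv ω) hω'int
  have hbw2 : |w2| ≤ I2 := int_bound2 a b x hab.le (deriv (deriv ω)) hω''int
  have hR : 0 ≤ R := intervalIntegral.integral_nonneg hab.le fun y _ => abs_nonneg _
  have hI1 : 0 ≤ I1 := integral_nonneg fun y => abs_nonneg _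
  have hM0 : 0 ≤ Mω := le_trans (abs_nonneg _) (hωbd 0)
  have hM1 : 0 ≤ Mω' := le_trans (abs_nonneg _) (hω'bd 0)
  have hM2 : 0 ≤ Mω'' := le_trans (abs_nonneg _) (hω''bd 0)
  have t1 : |n2 / W x| ≤ Mω'' * R / Kω := div_bound' hb2 hKω hwx
  have t2 : |n0 * w2 / W x ^ 2| ≤ Mω * R * I2 / Kω ^ 2 := by
    apply div_bound' _ (pow_pos hKω 2) (pow_le_pow_left₀ hKω.le hwx 2)
    rw [abs_mul]
    exact mul_le_mul hb0 hbw2 (abs_nonneg _) (mul_nonneg hM0 hR)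
  have t3 : |2 * w1 * n1 / W x ^ 2| ≤ 2 * (I1 * (Mω' * R)) / Kω ^ 2 := by
    apply div_bound' _ (pow_pos hKω 2) (pow_le_pow_left₀ hKω.le hwx 2)
    have h := mul_le_mul hbw1 hb1 (abs_nonneg _) hI1
    calc |2 * w1 * n1| = 2 * (|w1| * |n1|) := by
          rw [abs_mul, abs_mul, abs_two, mul_assoc]
      _ ≤ 2 * (I1 * (Mω' * R)) := by linarith
  have t4 : |2 * n0 * w1 ^ 2 / W x ^ 3| ≤ 2 * (Mω * R * I1 ^ 2) / Kω ^ 3 := by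
    apply div_bound' _ (pow_pos hKω 3) (pow_le_pow_left₀ hKω.le hwx 3)
    have h : |n0| * |w1| ^ 2 ≤ Mω * R * I1 ^ 2 :=
      mul_le_mul hb0 (pow_le_pow_left₀ (abs_nonneg _) hbw1 2)
        (pow_nonneg (abs_nonneg _) 2) (mul_nonneg hM0 hR)
    calc |2 * n0 * w1 ^ 2| = 2 * (|n0| * |w1| ^ 2) := by
          rw [abs_mul, abs_mul, abs_two, abs_pow, mul_assoc]
      _ ≤ 2 * (Mω * R * I1 ^ 2) := by linarith
  have htri := abs4 (n2 / W x) (n0 * w2 / W x ^ 2) (2 * w1 * n1 / W x ^ 2)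
    (2 * n0 * w1 ^ 2 / W x ^ 3)
  have hextra : 0 ≤ Mω'' * R / Kω := div_nonneg (mul_nonneg hM2 hR) hKω.le
  have hT : (2 * Mω'' / Kω + Mω * I2 / Kω ^ 2 + 2 * Mω * I1 ^ 2 / Kω ^ 3
        + 2 * Mω' * I1 / Kω ^ 2) * R
      = Mω'' * R / Kω + Mω * R * I2 / Kω ^ 2 + 2 * (I1 * (Mω' * R)) / Kω ^ 2
        + 2 * (Mω * R * I1 ^ 2) / Kω ^ 3 + Mω'' * R / Kω := by ring
  rw [hT]
  linarith
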